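/- Let a ≥ 0 and b ≥ 1. There is an integer n₀ = n₀(b) ≥ 2 such that for all n ≥ n₀ and all δ ≥ 1, if X is a δ-hyperbolic geodesic space and there is a map φ : Cₙ → X with a·d_{Cₙ}(x,y) ≤ d(φ(x),φ(y)) ≤ b·d_{Cₙ}(x,y) for all x,y ∈ Cₙ, then a < 12δ·(log n)/n. -/

import Mathlib

/-- `g` is a geodesic parametrization of a geodesic segment from `x` to `y`. -/
def IsGeodesicFrom {X : Type*} [MetricSpace X] (g : ℝ → X) (x y : X) : Prop :=
  g 0 = x ∧ g (dist x y) = y ∧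
    ∀ s ∈ Set.Icc (0 : ℝ) (dist x y), ∀ t ∈ Set.Icc (0 : ℝ) (dist x y),
      dist (g s) (g t) = |s - t|

/-- `X` is a geodesic metric space. -/
def GeodesicSpace (X : Type*) [MetricSpace X] : Prop :=
  ∀ x y : X, ∃ g : ℝ → X, IsGeodesicFrom g x y

/-- Rips condition: every side of every geodesic triangle lies in the `δ`-neighbourhood
of the union of the other two sides. -/
def RipsHyperbolic (X : Type*) [MetricSpace X] (δ : ℝ) : Prop :=
  ∀ x y z : X, ∀ gxy gxz gyz : ℝ → X,
    IsGeodesicFrom gxy x y → IsGeodesicFrom gxz x z → IsGeodesicFrom gyz y z →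
    ∀ p ∈ gxy '' Set.Icc (0 : ℝ) (dist x y),
      Metric.infDist p
        (gxz '' Set.Icc (0 : ℝ) (dist x z) ∪ gyz '' Set.Icc (0 : ℝ) (dist y z)) ≤ δ

/-- The graph metric on the cycle `C_m = Cayley(ℤ/mℤ, {±1})`. -/
noncomputable def cycleDist {m : ℕ} (x y : ZMod m) : ℕ :=
  sInf {k : ℕ | (k : ZMod m) = y - x ∨ (k : ZMod m) = x - y}

universe u

open Set Metric

section Aux

variable {X : Type*} [MetricSpace X]

private lemma geo_cont {g : ℝ → X} {x y : X}
    (h : IsGeodesicFrom g x y) : ContinuousOn g (Set.Icc 0 (dist x y)) := by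
  refine LipschitzOnWith.continuousOn (K := 1) (LipschitzOnWith.of_dist_le_mul ?_)
  intro s hs t ht
  rw [h.2.2 s hs t ht, Real.dist_eq]
  simp

private lemma geo_compact {g : ℝ → X} {x y : X} (h : IsGeodesicFrom g x y) :
    IsCompact (g '' Set.Icc 0 (dist x y)) :=
  isCompact_Icc.image_of_continuousOn (geo_cont h)

private lemma geo_ne {g : ℝ → X} {x y : X} (h : IsGeodesicFrom g x y) :
    (g '' Set.Icc 0 (dist x y)).Nonempty :=
  ⟨x, 0, ⟨le_refl _, dist_nonneg⟩, h.1⟩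

/-- Bisection lemma: every point on a geodesic joining the ends of a chain with steps
of length at most `b` is within `δ * ⌈log₂ N⌉ + b/2` of some chain point. -/
private lemma chain_shadow {δ b : ℝ} (hδ : 0 ≤ δ) (hb : 0 ≤ b)
    (hgeo : GeodesicSpace X) (hrips : RipsHyperbolic X δ) :
    ∀ (N : ℕ) (c : ℕ → X), (∀ k, k < N → dist (c k) (c (k + 1)) ≤ b) →
      ∀ g : ℝ → X, IsGeodesicFrom g (c 0) (c N) →
      ∀ x ∈ g '' Set.Icc (0 : ℝ) (dist (c 0) (c N)),
      ∃ k, k ≤ N ∧ dist x (c k) ≤ δ * (Nat.clog 2 N : ℝ) + b / 2 := by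
  intro N
  induction N using Nat.strong_induction_on with
  | _ N IH =>
    intro c hc g hg x hx
    obtain ⟨s, hs, rfl⟩ := hx
    rcases le_or_gt N 1 with hN1 | hN1
    · interval_cases N
      · refine ⟨0, le_refl _, ?_⟩
        have hs0 : s = 0 := le_antisymm (by simpa [dist_self] using hs.2) hs.1
        rw [hs0, hg.1, dist_self, Nat.clog_zero_right]
        push_cast
        linarith
      · have hD : dist (c 0) (c 1) ≤ b := hc 0 (by norm_num)
        have hD0 : (0 : ℝ) ≤ dist (c 0) (c 1) := dist_nonneg
        have d0 : dist (g s) (c 0) = s := by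
          have h := hg.2.2 s hs 0 ⟨le_refl _, dist_nonneg⟩
          rw [hg.1] at h
          rw [h, sub_zero, abs_of_nonneg hs.1]
        have d1 : dist (g s) (c 1) = dist (c 0) (c 1) - s := by
          have h := hg.2.2 s hs (dist (c 0) (c 1)) ⟨dist_nonneg, le_refl _⟩
          rw [hg.2.1] at h
          rw [h, abs_of_nonpos (by linarith [hs.2])]
          ring
        rw [Nat.clog_one_right]
        push_cast
        rcases le_or_gt s (dist (c 0) (c 1) / 2) with hhalf | hhalf
        · exact ⟨0, by norm_num, by rw [d0]; linarith⟩
        · exact ⟨1, le_refl _, by rw [d1]; linarith [hs.2]⟩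
    · -- N ≥ 2
      have hN2 : 2 ≤ N := hN1
      set m : ℕ := (N + 1) / 2 with hmdef
      have hm1 : 1 ≤ m := by omega
      have hmN : m < N := by omega
      have hcp : 0 < Nat.clog 2 N := Nat.clog_pos one_lt_two hN2
      obtain ⟨cc, hcc⟩ : ∃ cc, Nat.clog 2 N = cc + 1 := ⟨Nat.clog 2 N - 1, by omega⟩
      have hNle : N ≤ 2 ^ (cc + 1) := by rw [← hcc]; exact Nat.le_pow_clog one_lt_two N
      have hm2 : m ≤ 2 ^ cc := by rw [pow_succ] at hNle; omega
      have hclogm : Nat.clog 2 m ≤ cc := (Nat.clog_le_iff_le_pow one_lt_two).mpr hm2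
      have hclogm' : Nat.clog 2 (N - m) ≤ cc :=
        (Nat.clog_le_iff_le_pow one_lt_two).mpr (by omega)
      have hcN : (Nat.clog 2 N : ℝ) = (cc : ℝ) + 1 := by exact_mod_cast hcc
      obtain ⟨g1, hg1⟩ := hgeo (c 0) (c m)
      obtain ⟨g2, hg2⟩ := hgeo (c N) (c m)
      have hrip := hrips (c 0) (c N) (c m) g g1 g2 hg hg1 hg2 (g s) ⟨s, hs, rfl⟩
      obtain ⟨p', hp', hdp'⟩ :=
        ((geo_compact hg1).union (geo_compact hg2)).exists_infDist_eq_dist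
          (geo_ne hg1).inl (g s)
      have hdzp : dist (g s) p' ≤ δ := by rw [← hdp']; exact hrip
      cases hp' with
      | inl h1 =>
        obtain ⟨k, hk, hdk⟩ := IH m hmN c (fun k hk' => hc k (by omega)) g1 hg1 p' h1
        refine ⟨k, by omega, ?_⟩
        have hle2 : (Nat.clog 2 m : ℝ) ≤ (cc : ℝ) := by exact_mod_cast hclogm
        have htri := dist_triangle (g s) p' (c k)
        have hmul := mul_le_mul_of_nonneg_left hle2 hδ
        rw [hcN]
        linarith
      | inr h2 =>
        set c' : ℕ → X := fun k => c (N - k) with hc'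
        have hsteps : ∀ k, k < N - m → dist (c' k) (c' (k + 1)) ≤ b := by
          intro k hk'
          have e1 : c' k = c ((N - (k + 1)) + 1) := by
            simp only [hc']; congr 1; omega
          have e2 : c' (k + 1) = c (N - (k + 1)) := rfl
          rw [e1, e2, dist_comm]
          exact hc _ (by omega)
        have e0 : c' 0 = c N := by simp only [hc', Nat.sub_zero]
        have e1 : c' (N - m) = c m := by simp only [hc']; congr 1; omega
        have hg2' : IsGeodesicFrom g2 (c' 0) (c' (N - m)) := by
          rw [e0, e1]; exact hg2
        have h2' : p' ∈ g2 '' Set.Icc (0 : ℝ) (dist (c' 0) (c' (N - m))) := by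
          rw [e0, e1]; exact h2
        obtain ⟨k, hk, hdk⟩ := IH (N - m) (by omega) c' hsteps g2 hg2' p' h2'
        refine ⟨N - k, by omega, ?_⟩
        have hdk' : dist p' (c (N - k)) ≤ δ * (Nat.clog 2 (N - m) : ℝ) + b / 2 := hdk
        have hle2 : (Nat.clog 2 (N - m) : ℝ) ≤ (cc : ℝ) := by exact_mod_cast hclogm'
        have htri := dist_triangle (g s) p' (c (N - k))
        have hmul := mul_le_mul_of_nonneg_left hle2 hδ
        rw [hcN]
        linarith

/-- On a geodesic `[p₀, p₂]` of a triangle there is a point `δ`-close to both other sides. -/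
private lemma exists_center {δ : ℝ}
    (hrips : RipsHyperbolic X δ) {p₀ p₁ p₂ : X} {g01 g21 g02 : ℝ → X}
    (h01 : IsGeodesicFrom g01 p₀ p₁) (h21 : IsGeodesicFrom g21 p₂ p₁)
    (h02 : IsGeodesicFrom g02 p₀ p₂) :
    ∃ z ∈ g02 '' Set.Icc (0 : ℝ) (dist p₀ p₂),
      Metric.infDist z (g01 '' Set.Icc (0 : ℝ) (dist p₀ p₁)) ≤ δ ∧
      Metric.infDist z (g21 '' Set.Icc (0 : ℝ) (dist p₂ p₁)) ≤ δ := by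
  set S1 := g01 '' Set.Icc (0 : ℝ) (dist p₀ p₁) with hS1
  set S2 := g21 '' Set.Icc (0 : ℝ) (dist p₂ p₁) with hS2
  have hD0 : (0 : ℝ) ≤ dist p₀ p₂ := dist_nonneg
  set f : ℝ → ℝ := fun t => Metric.infDist (g02 t) S1 - Metric.infDist (g02 t) S2 with hf
  have hfc : ContinuousOn f (Set.Icc 0 (dist p₀ p₂)) := by
    apply ContinuousOn.sub
    · exact (continuous_infDist_pt S1).comp_continuousOn (geo_cont h02)
    · exact (continuous_infDist_pt S2).comp_continuousOn (geo_cont h02)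
  have hf0 : f 0 ≤ 0 := by
    have h1 : Metric.infDist (g02 0) S1 = 0 := by
      rw [h02.1]
      exact Metric.infDist_zero_of_mem ⟨0, ⟨le_refl _, dist_nonneg⟩, h01.1⟩
    have h2 : 0 ≤ Metric.infDist (g02 0) S2 := Metric.infDist_nonneg
    simp only [hf]
    linarith
  have hfD : 0 ≤ f (dist p₀ p₂) := by
    have h1 : Metric.infDist (g02 (dist p₀ p₂)) S2 = 0 := by
      rw [h02.2.1]
      exact Metric.infDist_zero_of_mem ⟨0, ⟨le_refl _, dist_nonneg⟩, h21.1⟩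
    have h2 : 0 ≤ Metric.infDist (g02 (dist p₀ p₂)) S1 := Metric.infDist_nonneg
    simp only [hf]
    linarith
  obtain ⟨t, ht, hft⟩ := intermediate_value_Icc hD0 hfc ⟨hf0, hfD⟩
  refine ⟨g02 t, ⟨t, ht, rfl⟩, ?_⟩
  have hrip := hrips p₀ p₂ p₁ g02 g01 g21 h02 h01 h21 (g02 t) ⟨t, ht, rfl⟩
  obtain ⟨w, hw, hdw⟩ :=
    ((geo_compact h01).union (geo_compact h21)).exists_infDist_eq_dist
      (geo_ne h01).inl (g02 t)
  have hwle : dist (g02 t) w ≤ δ := by rw [← hdw]; exact hrip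
  have heq : Metric.infDist (g02 t) S1 = Metric.infDist (g02 t) S2 := by
    have h0 : f t = 0 := hft
    simp only [hf] at h0
    linarith
  cases hw with
  | inl h =>
    have h' := Metric.infDist_le_dist_of_mem (x := g02 t) h
    exact ⟨le_trans h' hwle, heq ▸ le_trans h' hwle⟩
  | inr h =>
    have h' := Metric.infDist_le_dist_of_mem (x := g02 t) h
    exact ⟨heq ▸ le_trans h' hwle, le_trans h' hwle⟩

end Aux

private lemma cd_le {n : ℕ} {x y : ZMod n} {k : ℕ}
    (h : (k : ZMod n) = y - x ∨ (k : ZMod n) = x - y) : cycleDist x y ≤ k :=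
  Nat.sInf_le h

private lemma cd_adj {n : ℕ} (t : ℕ) :
    cycleDist ((t : ℕ) : ZMod n) (((t + 1 : ℕ)) : ZMod n) ≤ 1 := by
  apply cd_le
  left
  push_cast
  ring

private lemma cd_adj' {n : ℕ} (t : ℕ) :
    cycleDist (((t + 1 : ℕ)) : ZMod n) ((t : ℕ) : ZMod n) ≤ 1 := by
  apply cd_le
  right
  push_cast
  ring

private lemma cd_lower {n : ℕ} (hn : 0 < n) {i j : ℕ} (hij : i ≤ j) (hjn : j ≤ n) :
    min (j - i) (n - (j - i)) ≤ cycleDist (i : ZMod n) (j : ZMod n) := by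
  have hminl := min_le_left (j - i) (n - (j - i))
  have hminr := min_le_right (j - i) (n - (j - i))
  set S : Set ℕ :=
    {k : ℕ | (k : ZMod n) = (j : ZMod n) - (i : ZMod n) ∨
             (k : ZMod n) = (i : ZMod n) - (j : ZMod n)} with hS
  have hdS : (j - i : ℕ) ∈ S := by
    left
    push_cast [Nat.cast_sub hij]
    ring
  have hne : S.Nonempty := ⟨_, hdS⟩
  have hmem : cycleDist (i : ZMod n) (j : ZMod n) ∈ S := Nat.sInf_mem hne
  have hle : cycleDist (i : ZMod n) (j : ZMod n) ≤ j - i := Nat.sInf_le hdS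
  set k := cycleDist (i : ZMod n) (j : ZMod n) with hk
  set d := j - i with hd
  have hdn : d ≤ n := by omega
  rcases hmem with h | h
  · have hcast : (k : ZMod n) = ((d : ℕ) : ZMod n) := by
      rw [h]
      push_cast [Nat.cast_sub hij]
      rw [hd, Nat.cast_sub hij]
    have hmod : k % n = d % n := (ZMod.natCast_eq_natCast_iff _ _ _).mp hcast
    rcases lt_or_eq_of_le hdn with hlt | heqn
    · have : k = d := by
        rw [Nat.mod_eq_of_lt (lt_of_le_of_lt hle hlt), Nat.mod_eq_of_lt hlt] at hmod
        exact hmod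
      omega
    · omega
  · have hcast : (k : ZMod n) = (((n - d : ℕ)) : ZMod n) := by
      rw [h]
      push_cast [Nat.cast_sub hdn, Nat.cast_sub hij, ZMod.natCast_self]
      rw [hd, Nat.cast_sub hij]; ring
    have hmod : k % n = (n - d) % n := (ZMod.natCast_eq_natCast_iff _ _ _).mp hcast
    rcases Nat.eq_zero_or_pos d with h0 | h0
    · have : k = 0 := by omega
      omega
    rcases lt_or_eq_of_le hdn with hlt | heqn
    · have : k = n - d := by
        rw [Nat.mod_eq_of_lt (by omega), Nat.mod_eq_of_lt (by omega)] at hmod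
        exact hmod
      omega
    · omega

set_option maxHeartbeats 1000000 in
/-- Let `a ≥ 0`, `b ≥ 1`.  There is `n₀ = n₀(b) ≥ 2` such that for all `n ≥ n₀` and all
`δ ≥ 1`: if `X` is a `δ`-hyperbolic geodesic space and `φ : Cₙ → X` satisfies
`a·d(x,y) ≤ d(φx,φy) ≤ b·d(x,y)` for all `x,y ∈ Cₙ`, then `a < 12δ·(log n)/n`. -/
theorem cycle_embedding_bound_uniform (a b : ℝ) (ha : 0 ≤ a) (hb : 1 ≤ b) :
    ∃ n₀ : ℕ, 2 ≤ n₀ ∧ ∀ n : ℕ, n₀ ≤ n → ∀ δ : ℝ, 1 ≤ δ →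
      ∀ (X : Type u) (_ : MetricSpace X), GeodesicSpace X → RipsHyperbolic X δ →
      ∀ φ : ZMod n → X,
        (∀ x y : ZMod n,
          a * (cycleDist x y : ℝ) ≤ dist (φ x) (φ y) ∧
          dist (φ x) (φ y) ≤ b * (cycleDist x y : ℝ)) →
        a < 12 * δ * (Real.log n / n) := by
  refine ⟨max 3000 ⌈Real.exp (20 * b + 41)⌉₊,
    le_trans (by norm_num) (le_max_left _ _), ?_⟩
  intro n hn δ hδ X mX hgeo hrips φ hφ
  by_contra hcon
  push_neg at hcon
  have hn3000 : 3000 ≤ n := le_trans (le_max_left _ _) hn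
  have hnc : ⌈Real.exp (20 * b + 41)⌉₊ ≤ n := le_trans (le_max_right _ _) hn
  have hδ0 : (0 : ℝ) ≤ δ := by linarith
  have hb0 : (0 : ℝ) ≤ b := by linarith
  have hnpos : 0 < n := by omega
  set m : ℕ := n / 4 with hmdef
  have hm4 : 4 * m ≤ n := by omega
  have hm4' : n ≤ 4 * m + 3 := by omega
  have hm750 : 750 ≤ m := by omega
  -- chain steps
  have hstep : ∀ x y : ZMod n, cycleDist x y ≤ 1 → dist (φ x) (φ y) ≤ b := by
    intro x y hc
    have h2 := (hφ x y).2
    have hcr : (cycleDist x y : ℝ) ≤ 1 := by exact_mod_cast hc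
    nlinarith [Nat.cast_nonneg (α := ℝ) (cycleDist x y)]
  set P : ℕ → X := fun k => φ ((k : ℕ) : ZMod n) with hP
  have hstep1 : ∀ t : ℕ, dist (P t) (P (t + 1)) ≤ b := fun t => hstep _ _ (cd_adj t)
  have hstep2 : ∀ t : ℕ, dist (P (t + 1)) (P t) ≤ b := fun t => hstep _ _ (cd_adj' t)
  -- geodesics
  obtain ⟨g01, hg01⟩ := hgeo (P 0) (P m)
  obtain ⟨g21, hg21⟩ := hgeo (P (2 * m)) (P m)
  obtain ⟨g02, hg02⟩ := hgeo (P 0) (P (2 * m))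
  obtain ⟨g03, hg03⟩ := hgeo (P 0) (P (3 * m))
  obtain ⟨g23, hg23⟩ := hgeo (P (2 * m)) (P (3 * m))
  -- the common bound R
  set R : ℝ := δ * (Nat.clog 2 n : ℝ) + b / 2 with hR
  have hRmono : ∀ N : ℕ, N ≤ n → δ * (Nat.clog 2 N : ℝ) + b / 2 ≤ R := by
    intro N hN
    have h1 : Nat.clog 2 N ≤ Nat.clog 2 n := Nat.clog_mono_right 2 hN
    have h2 : (Nat.clog 2 N : ℝ) ≤ (Nat.clog 2 n : ℝ) := by exact_mod_cast h1
    have := mul_le_mul_of_nonneg_left h2 hδ0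
    rw [hR]
    linarith
  -- shadows of the four sides on the cycle
  have shadow01 : ∀ u ∈ g01 '' Set.Icc (0 : ℝ) (dist (P 0) (P m)),
      ∃ i, i ≤ m ∧ dist u (P i) ≤ R := by
    intro u hu
    obtain ⟨k, hk, hdk⟩ :=
      chain_shadow hδ0 hb0 hgeo hrips m P (fun k _ => hstep1 k) g01 hg01 u hu
    exact ⟨k, hk, le_trans hdk (hRmono m (by omega))⟩
  have shadow21 : ∀ u ∈ g21 '' Set.Icc (0 : ℝ) (dist (P (2 * m)) (P m)),
      ∃ i, m ≤ i ∧ i ≤ 2 * m ∧ dist u (P i) ≤ R := by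
    intro u hu
    set c2 : ℕ → X := fun k => P (2 * m - k) with hc2
    have hsteps : ∀ k, k < m → dist (c2 k) (c2 (k + 1)) ≤ b := by
      intro k hk
      have e1 : c2 k = P ((2 * m - (k + 1)) + 1) := by
        simp only [hc2]; congr 1; omega
      have e2 : c2 (k + 1) = P (2 * m - (k + 1)) := rfl
      rw [e1, e2]
      exact hstep2 _
    have e0 : c2 0 = P (2 * m) := by simp only [hc2, Nat.sub_zero]
    have e1 : c2 m = P m := by simp only [hc2]; congr 1; omega
    have hg21' : IsGeodesicFrom g21 (c2 0) (c2 m) := by rw [e0, e1]; exact hg21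
    have hu' : u ∈ g21 '' Set.Icc (0 : ℝ) (dist (c2 0) (c2 m)) := by
      rw [e0, e1]; exact hu
    obtain ⟨k, hk, hdk⟩ :=
      chain_shadow hδ0 hb0 hgeo hrips m c2 hsteps g21 hg21' u hu'
    refine ⟨2 * m - k, by omega, by omega, ?_⟩
    exact le_trans hdk (hRmono m (by omega))
  have shadow03 : ∀ u ∈ g03 '' Set.Icc (0 : ℝ) (dist (P 0) (P (3 * m))),
      ∃ j, 3 * m ≤ j ∧ j ≤ n ∧ dist u (P j) ≤ R := by
    intro u hu
    set c3 : ℕ → X := fun k => P (n - k) with hc3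
    have hsteps : ∀ k, k < n - 3 * m → dist (c3 k) (c3 (k + 1)) ≤ b := by
      intro k hk
      have e1 : c3 k = P ((n - (k + 1)) + 1) := by
        simp only [hc3]; congr 1; omega
      have e2 : c3 (k + 1) = P (n - (k + 1)) := rfl
      rw [e1, e2]
      exact hstep2 _
    have ePn : P n = P 0 := by
      simp only [hP]
      congr 1
      simp [ZMod.natCast_self]
    have e0 : c3 0 = P 0 := by
      simp only [hc3, Nat.sub_zero]; exact ePn
    have e1 : c3 (n - 3 * m) = P (3 * m) := by
      simp only [hc3]; congr 1; omega
    have hg03' : IsGeodesicFrom g03 (c3 0) (c3 (n - 3 * m)) := by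
      rw [e0, e1]; exact hg03
    have hu' : u ∈ g03 '' Set.Icc (0 : ℝ) (dist (c3 0) (c3 (n - 3 * m))) := by
      rw [e0, e1]; exact hu
    obtain ⟨k, hk, hdk⟩ :=
      chain_shadow hδ0 hb0 hgeo hrips (n - 3 * m) c3 hsteps g03 hg03' u hu'
    refine ⟨n - k, by omega, by omega, ?_⟩
    exact le_trans hdk (hRmono (n - 3 * m) (by omega))
  have shadow23 : ∀ u ∈ g23 '' Set.Icc (0 : ℝ) (dist (P (2 * m)) (P (3 * m))),
      ∃ j, 2 * m ≤ j ∧ j ≤ 3 * m ∧ dist u (P j) ≤ R := by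
    intro u hu
    set c4 : ℕ → X := fun k => P (2 * m + k) with hc4
    have hsteps : ∀ k, k < m → dist (c4 k) (c4 (k + 1)) ≤ b := by
      intro k hk
      exact hstep1 _
    have e0 : c4 0 = P (2 * m) := by simp only [hc4, Nat.add_zero]
    have e1 : c4 m = P (3 * m) := by simp only [hc4]; congr 1; omega
    have hg23' : IsGeodesicFrom g23 (c4 0) (c4 m) := by rw [e0, e1]; exact hg23
    have hu' : u ∈ g23 '' Set.Icc (0 : ℝ) (dist (c4 0) (c4 m)) := by
      rw [e0, e1]; exact hu
    obtain ⟨k, hk, hdk⟩ :=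
      chain_shadow hδ0 hb0 hgeo hrips m c4 hsteps g23 hg23' u hu'
    refine ⟨2 * m + k, by omega, by omega, ?_⟩
    exact le_trans hdk (hRmono m (by omega))
  -- the center point
  obtain ⟨z, hzmem, hz1, hz2⟩ := exists_center hrips hg01 hg21 hg02
  have hrip2 := hrips (P 0) (P (2 * m)) (P (3 * m)) g02 g03 g23 hg02 hg03 hg23 z hzmem
  obtain ⟨w, hw, hdww⟩ :=
    ((geo_compact hg03).union (geo_compact hg23)).exists_infDist_eq_dist
      (geo_ne hg03).inl z
  have hzw : dist z w ≤ δ := by rw [← hdww]; exact hrip2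
  -- the far pair
  have key : ∃ i j : ℕ, i ≤ j ∧ j ≤ n ∧ m ≤ j - i ∧ j - i ≤ n - m ∧
      dist (P i) (P j) ≤ 2 * R + 2 * δ := by
    cases hw with
    | inl hw03 =>
      obtain ⟨v, hv, hvd⟩ := (geo_compact hg21).exists_infDist_eq_dist (geo_ne hg21) z
      have hzv : dist z v ≤ δ := by rw [← hvd]; exact hz2
      obtain ⟨i, hi1, hi2, hiv⟩ := shadow21 v hv
      obtain ⟨j, hj1, hj2, hjw⟩ := shadow03 w hw03
      refine ⟨i, j, by omega, by omega, by omega, by omega, ?_⟩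
      have t1 : dist (P i) (P j) ≤ dist (P i) z + dist z (P j) := dist_triangle _ _ _
      have t2 : dist (P i) z ≤ dist (P i) v + dist v z := dist_triangle _ _ _
      have t3 : dist z (P j) ≤ dist z w + dist w (P j) := dist_triangle _ _ _
      rw [dist_comm (P i) v, dist_comm v z] at t2
      linarith
    | inr hw23 =>
      obtain ⟨v, hv, hvd⟩ := (geo_compact hg01).exists_infDist_eq_dist (geo_ne hg01) z
      have hzv : dist z v ≤ δ := by rw [← hvd]; exact hz1
      obtain ⟨i, hi1, hiv⟩ := shadow01 v hv
      obtain ⟨j, hj1, hj2, hjw⟩ := shadow23 w hw23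
      refine ⟨i, j, by omega, by omega, by omega, by omega, ?_⟩
      have t1 : dist (P i) (P j) ≤ dist (P i) z + dist z (P j) := dist_triangle _ _ _
      have t2 : dist (P i) z ≤ dist (P i) v + dist v z := dist_triangle _ _ _
      have t3 : dist z (P j) ≤ dist z w + dist w (P j) := dist_triangle _ _ _
      rw [dist_comm (P i) v, dist_comm v z] at t2
      linarith
  obtain ⟨i, j, hij, hjn, hmlow, hmhigh, hdij⟩ := key
  -- cycle distance lower bound
  have hcd := cd_lower hnpos hij hjn
  have hmin : m ≤ min (j - i) (n - (j - i)) := by omega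
  have hcdm : (m : ℝ) ≤ (cycleDist ((i : ℕ) : ZMod n) ((j : ℕ) : ZMod n) : ℝ) := by
    exact_mod_cast le_trans hmin hcd
  have hdistlow : a * (cycleDist ((i : ℕ) : ZMod n) ((j : ℕ) : ZMod n) : ℝ)
      ≤ dist (P i) (P j) := (hφ _ _).1
  have hcomb : a * (m : ℝ) ≤ 2 * R + 2 * δ := by
    have h1 := mul_le_mul_of_nonneg_left hcdm ha
    linarith
  -- a ≤ b
  have hab : a ≤ b := by
    have hc1 := cd_lower hnpos (show (0 : ℕ) ≤ 1 by omega) (show (1 : ℕ) ≤ n by omega)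
    have h1 := (hφ ((0 : ℕ) : ZMod n) ((1 : ℕ) : ZMod n)).1
    have h2 := (hφ ((0 : ℕ) : ZMod n) ((1 : ℕ) : ZMod n)).2
    have hcge : (1 : ℝ) ≤ (cycleDist ((0 : ℕ) : ZMod n) ((1 : ℕ) : ZMod n) : ℝ) := by
      have hnat : (1 : ℕ) ≤ cycleDist ((0 : ℕ) : ZMod n) ((1 : ℕ) : ZMod n) := by
        have : min (1 - 0) (n - (1 - 0)) = 1 := by omega
        omega
      exact_mod_cast hnat
    nlinarith
  -- clog bound
  have h2n : 2 ≤ n := by omega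
  have hc1 : 0 < Nat.clog 2 n := Nat.clog_pos one_lt_two h2n
  have hpow : 2 ^ (Nat.clog 2 n - 1) < n := Nat.pow_pred_clog_lt_self one_lt_two (by omega)
  have hpr : ((2 : ℝ)) ^ (Nat.clog 2 n - 1 : ℕ) ≤ (n : ℝ) := by exact_mod_cast hpow.le
  have hlg : ((Nat.clog 2 n - 1 : ℕ) : ℝ) * Real.log 2 ≤ Real.log n := by
    have hlog := Real.log_le_log (by positivity) hpr
    rwa [Real.log_pow] at hlog
  have hcast : ((Nat.clog 2 n - 1 : ℕ) : ℝ) = (Nat.clog 2 n : ℝ) - 1 := by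
    have : 1 ≤ Nat.clog 2 n := hc1
    push_cast [Nat.cast_sub this]
    ring
  have hlog2 := Real.log_two_gt_d9
  have hC1 : (0 : ℝ) ≤ (Nat.clog 2 n : ℝ) - 1 := by
    have : (1 : ℝ) ≤ (Nat.clog 2 n : ℝ) := by exact_mod_cast hc1
    linarith
  have hL0 : (0 : ℝ) ≤ Real.log n := by
    rw [hcast] at hlg
    nlinarith
  have hCb : (Nat.clog 2 n : ℝ) ≤ 1.443 * Real.log n + 1 := by
    rw [hcast] at hlg
    nlinarith [mul_le_mul_of_nonneg_left hlog2.le hC1]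
  -- log n is large
  have hexp : Real.exp (20 * b + 41) ≤ (n : ℝ) := by
    refine le_trans (Nat.le_ceil _) ?_
    exact_mod_cast hnc
  have hlogn : 20 * b + 41 ≤ Real.log n := by
    have hlog := Real.log_le_log (Real.exp_pos _) hexp
    rwa [Real.log_exp] at hlog
  -- turn hcon into a product form
  have hnR : (3000 : ℝ) ≤ (n : ℝ) := by exact_mod_cast hn3000
  have hnposR : (0 : ℝ) < (n : ℝ) := by linarith
  have hcon' : 12 * δ * Real.log n ≤ a * n := by
    have h := mul_le_mul_of_nonneg_right hcon (le_of_lt hnposR)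
    have e : 12 * δ * (Real.log n / (n : ℝ)) * (n : ℝ) = 12 * δ * Real.log n := by
      field_simp
    rw [e] at h
    exact h
  have hm34 : (n : ℝ) - 3 ≤ 4 * (m : ℝ) := by
    have : (n : ℝ) ≤ 4 * (m : ℝ) + 3 := by exact_mod_cast hm4'
    linarith
  -- final contradiction
  have hmR : (0 : ℝ) ≤ (m : ℝ) := Nat.cast_nonneg m
  rw [hR] at hcomb
  have hA : a * (n : ℝ) ≤ 4 * (a * (m : ℝ)) + 3 * a := by
    nlinarith [mul_nonneg ha (show (0 : ℝ) ≤ 4 * (m : ℝ) + 3 - (n : ℝ) by linarith)]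
  have hD : δ * (Nat.clog 2 n : ℝ) ≤ 1.443 * (δ * Real.log n) + δ := by
    nlinarith [mul_le_mul_of_nonneg_left hCb hδ0]
  have hE : δ * (20 * b + 41) ≤ δ * Real.log n := mul_le_mul_of_nonneg_left hlogn hδ0
  have hG : (0 : ℝ) ≤ (δ - 1) * b := mul_nonneg (by linarith) hb0
  have hH : (0 : ℝ) ≤ δ * b := mul_nonneg hδ0 hb0
  linarith only [hcomb, hcon', hA, hD, hE, hG, hH, hab, hδ]
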